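/- Let G = (V,E) be a finite simple undirected graph and let G' be the graph on vertex set V ⊎ V (with copies written inl v and inr v) whose edges are: inl u – inl v for every edge uv ∈ E, and inl v – inr v for every v ∈ V. Let T = { inr v : v ∈ V } be the set of terminals of G'. Then every LP-feasible assignment d for (G',T) has cost at least μ(G), the maximum size of a matching in G. -/

import Mathlib

open Finset

/-- The graph `G'` on `V ⊕ V`: `inl u — inl v` for every edge `uv` of `G`, together with
the pendant edges `inl v — inr v` for every `v ∈ V`. -/
def terminalGadget {V : Type*} (G : SimpleGraph V) : SimpleGraph (V ⊕ V) where
  Adj a b :=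
    match a, b with
    | .inl u, .inl v => G.Adj u v
    | .inl u, .inr v => u = v
    | .inr u, .inl v => u = v
    | .inr _, .inr _ => False
  symm := by
    constructor
    rintro (u | u) (v | v) h
    · exact G.adj_symm h
    · exact h.symm
    · exact h.symm
    · exact h
  loopless := by
    constructor
    rintro (u | u) h
    · exact G.irrefl h
    · exact h

/-- `M` is a matching of `G`: a set of edges of `G` that are pairwise vertex-disjoint. -/
def IsMatching {V : Type*} (G : SimpleGraph V) (M : Finset (Sym2 V)) : Prop :=
  (∀ e ∈ M, e ∈ G.edgeSet) ∧
  ∀ e ∈ M, ∀ f ∈ M, e ≠ f → ∀ v : V, v ∈ e → v ∉ f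

/-- `μ(G)`: the maximum cardinality of a matching of `G`. -/
noncomputable def matchingNumber {V : Type*} (G : SimpleGraph V) : ℕ :=
  sSup {n : ℕ | ∃ M : Finset (Sym2 V), IsMatching G M ∧ M.card = n}

/-- Every LP-feasible assignment `d` for `(G', T)`, where `T = {inr v : v ∈ V}` is the
set of terminals of the gadget graph `G'`, has cost at least `μ(G)`. Non-terminal
vertices are exactly the `inl` vertices. -/
theorem lp_cost_ge_matchingNumber {V : Type*} [Fintype V] [DecidableEq V]
    (G : SimpleGraph V) (d : V ⊕ V → ℝ)
    (hnn : ∀ v : V, 0 ≤ d (Sum.inl v))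
    (hfeas : ∀ ⦃t₁ t₂ : V ⊕ V⦄, t₁ ∈ Set.range Sum.inr → t₂ ∈ Set.range Sum.inr →
      t₁ ≠ t₂ → ∀ p : (terminalGadget G).Walk t₁ t₂, p.IsPath →
        1 ≤ ∑ v ∈ p.support.toFinset.filter (fun a => a.isLeft = true), d v) :
    (matchingNumber G : ℝ) ≤ ∑ v : V, d (Sum.inl v) := by
  -- the set of matching sizes is nonempty and bounded above
  set S : Set ℕ := {n : ℕ | ∃ M : Finset (Sym2 V), IsMatching G M ∧ M.card = n} with hS
  have hne : S.Nonempty := ⟨0, ∅, ⟨by simp, by simp⟩, rfl⟩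
  have hbdd : BddAbove S := by
    refine ⟨Fintype.card (Sym2 V), ?_⟩
    rintro n ⟨M, _, rfl⟩
    exact M.card_le_univ.trans (le_of_eq (Finset.card_univ))
  have hmem : matchingNumber G ∈ S := Nat.sSup_mem hne hbdd
  obtain ⟨M, hM, hcard⟩ := hmem
  -- key inequality for each edge of the matching
  set F : Sym2 V → Finset V := fun e => Finset.univ.filter (· ∈ e) with hF
  have hmemF : ∀ (e : Sym2 V) (v : V), v ∈ F e ↔ v ∈ e := by
    intro e v; simp [hF]
  have key : ∀ e ∈ M, 1 ≤ ∑ v ∈ F e, d (Sum.inl v) := by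
    intro e he
    induction e using Sym2.ind with
    | _ u v =>
      have hadj : G.Adj u v := hM.1 _ he
      have huv : u ≠ v := hadj.ne
      have h1 : (terminalGadget G).Adj (Sum.inr u) (Sum.inl u) := rfl
      have h2 : (terminalGadget G).Adj (Sum.inl u) (Sum.inl v) := hadj
      have h3 : (terminalGadget G).Adj (Sum.inl v) (Sum.inr v) := rfl
      set p : (terminalGadget G).Walk (Sum.inr u) (Sum.inr v) :=
        .cons h1 (.cons h2 (.cons h3 .nil)) with hp
      have hpath : p.IsPath := by
        rw [SimpleGraph.Walk.isPath_def]
        simp [hp, huv, huv.symm]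
      have := hfeas ⟨u, rfl⟩ ⟨v, rfl⟩ (by simp [huv]) p hpath
      refine this.trans (le_of_eq ?_)
      have hsupp : p.support = [Sum.inr u, Sum.inl u, Sum.inl v, Sum.inr v] := rfl
      have hFe : F s(u, v) = {u, v} := by
        ext x; simp [hF, Sym2.mem_iff]
      rw [hsupp, hFe]
      have : ([Sum.inr u, Sum.inl u, Sum.inl v, Sum.inr v] : List (V ⊕ V)).toFinset.filter
          (fun a => a.isLeft = true) = {Sum.inl u, Sum.inl v} := by
        ext x; rcases x with x | x <;> simp [huv]
      rw [this]
      rw [Finset.sum_pair (by simpa using huv), Finset.sum_pair (by simp [huv])]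
  -- disjointness
  have hdisj : (M : Set (Sym2 V)).PairwiseDisjoint F := by
    intro e he f hf hef
    simp only [Function.onFun]; rw [Finset.disjoint_left]
    intro v hv hv'
    exact hM.2 e he f hf hef v ((hmemF e v).1 hv) ((hmemF f v).1 hv')
  calc (matchingNumber G : ℝ) = ∑ _e ∈ M, (1 : ℝ) := by simp [← hcard]
    _ ≤ ∑ e ∈ M, ∑ v ∈ F e, d (Sum.inl v) := Finset.sum_le_sum key
    _ = ∑ v ∈ M.biUnion F, d (Sum.inl v) := (Finset.sum_biUnion hdisj).symm
    _ ≤ ∑ v : V, d (Sum.inl v) :=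
        Finset.sum_le_sum_of_subset_of_nonneg (Finset.subset_univ _) (fun v _ _ => hnn v)
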